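/- For all u, w ∈ S_n there exists v ∈ S_n with v ≤ u, v ≤ w and al(v,u) + al(v,w) = ℓ′(u·w⁻¹) = n − c(u·w⁻¹). -/

import Mathlib

open Equiv

/-- The length of a permutation: its number of inversions. -/
def len {n : ℕ} (w : Perm (Fin n)) : ℕ :=
  (Finset.univ.filter (fun p : Fin n × Fin n => p.1 < p.2 ∧ w p.2 < w p.1)).card

/-- Directed edge of the Bruhat graph on `S_n`. -/
def edge {n : ℕ} (x y : Perm (Fin n)) : Prop :=
  (∃ t : Perm (Fin n), t.IsSwap ∧ y = t * x) ∧ len x < len y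

/-- The Bruhat order: `u ≤ w` iff `u = w` or there is a directed path from `u` to `w`. -/
def bruhatLe {n : ℕ} (u w : Perm (Fin n)) : Prop :=
  Relation.ReflTransGen edge u w

/-- `reachesIn r m u w` : there is a directed path with `m` edges from `u` to `w`. -/
def reachesIn {α : Type*} (r : α → α → Prop) : ℕ → α → α → Prop
  | 0, u, w => u = w
  | (m+1), u, w => ∃ v, r u v ∧ reachesIn r m v w

/-- `al u w` : the minimum number of edges of a directed path from `u` to `w`
in the Bruhat graph. -/
noncomputable def al {n : ℕ} (u w : Perm (Fin n)) : ℕ :=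
  sInf {m | reachesIn edge m u w}

/-- The absolute length: least `k` such that `v` is a product of `k` transpositions. -/
noncomputable def absLen {n : ℕ} (v : Perm (Fin n)) : ℕ :=
  sInf {k | ∃ l : List (Perm (Fin n)), l.length = k ∧ (∀ t ∈ l, t.IsSwap) ∧ l.prod = v}

/-- The number of cycles of `v` on `{1,…,n}`, including fixed points: the number of
nontrivial cycles in the disjoint cycle decomposition plus the number of fixed points. -/
def numCycles {n : ℕ} (v : Perm (Fin n)) : ℕ :=
  v.cycleFactorsFinset.card + (Finset.univ.filter (fun i : Fin n => v i = i)).card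

namespace BruhatAux
open Equiv.Perm Finset

variable {n : ℕ}

lemma apply_inv_self {α : Type*} (f : Perm α) (x : α) : f (f⁻¹ x) = x := f.apply_symm_apply x

lemma inv_apply_self {α : Type*} (f : Perm α) (x : α) : f⁻¹ (f x) = x := f.symm_apply_apply x

lemma fixed_card (z : Perm (Fin n)) :
    (Finset.univ.filter (fun i : Fin n => z i = i)).card = n - z.support.card := by
  have h := Finset.card_filter_add_card_filter_not
    (s := (Finset.univ : Finset (Fin n))) (p := fun i => z i = i)
  have hsupp : z.support = Finset.univ.filter (fun i => ¬ z i = i) := rfl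
  rw [← hsupp] at h
  simp only [Finset.card_univ, Fintype.card_fin] at h
  omega

lemma numCycles_eq (z : Perm (Fin n)) :
    numCycles z = z.cycleFactorsFinset.card + (n - z.support.card) := by
  rw [numCycles, fixed_card]

lemma supp_card_le (z : Perm (Fin n)) : z.support.card ≤ n := by
  simpa using Finset.card_le_card (Finset.subset_univ z.support)

lemma numCycles_one : numCycles (1 : Perm (Fin n)) = n := by
  rw [numCycles_eq, cycleFactorsFinset_one]
  simp

lemma factors_card_le_supp (z : Perm (Fin n)) :
    z.cycleFactorsFinset.card ≤ z.support.card := by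
  have hsum : ∑ c ∈ z.cycleFactorsFinset, c.support.card = z.support.card := by
    rw [← Equiv.Perm.sum_cycleType]; rfl
  calc z.cycleFactorsFinset.card = ∑ _c ∈ z.cycleFactorsFinset, 1 := by simp
    _ ≤ ∑ c ∈ z.cycleFactorsFinset, c.support.card := by
        apply Finset.sum_le_sum
        intro c hc
        exact le_trans (by norm_num) (mem_cycleFactorsFinset_iff.1 hc).1.two_le_card_support
    _ = z.support.card := hsum

lemma numCycles_le (z : Perm (Fin n)) : numCycles z ≤ n := by
  have h1 := factors_card_le_supp z
  have h2 := supp_card_le z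
  rw [numCycles_eq]
  omega

lemma disjoint_supp_card {d g : Perm (Fin n)} (h : Perm.Disjoint d g) :
    d.support.card + g.support.card ≤ n := by
  have h' : _root_.Disjoint d.support g.support := disjoint_iff_disjoint_support.1 h
  calc d.support.card + g.support.card = (d.support ∪ g.support).card :=
        (Finset.card_union_of_disjoint h').symm
    _ ≤ (Finset.univ : Finset (Fin n)).card := Finset.card_le_card (Finset.subset_univ _)
    _ = n := by simp

lemma numCycles_disjoint_mul {d g : Perm (Fin n)} (h : Perm.Disjoint d g) :
    numCycles (d * g) =
      d.cycleFactorsFinset.card + g.cycleFactorsFinset.card +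
        (n - (d.support.card + g.support.card)) := by
  rw [numCycles_eq, h.cycleFactorsFinset_mul_eq_union,
    Finset.card_union_of_disjoint h.disjoint_cycleFactorsFinset, h.support_mul,
    Finset.card_union_of_disjoint (disjoint_iff_disjoint_support.1 h)]

lemma disjoint_of_subset {d g : Perm (Fin n)} {s : Finset (Fin n)} (hg : g.support ⊆ s)
    (hs : ∀ i ∈ s, d i = i) : Perm.Disjoint d g := fun x => by
  by_cases hx : g x = x
  · exact Or.inr hx
  · exact Or.inl (hs x (hg (mem_support.2 hx)))

lemma factors_pos {g : Perm (Fin n)} (hg : g ≠ 1) : 1 ≤ g.cycleFactorsFinset.card := by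
  rcases Finset.eq_empty_or_nonempty g.cycleFactorsFinset with h | h
  · exact absurd (cycleFactorsFinset_eq_empty_iff.1 h) hg
  · exact Finset.card_pos.2 h

lemma numCycles_mul_aux {y d g₀ t : Perm (Fin n)} (hy : y = d * g₀)
    (htd : t * d = d * t) (hdisj : Perm.Disjoint d (t * g₀)) :
    numCycles (t * y) = d.cycleFactorsFinset.card + (t * g₀).cycleFactorsFinset.card +
      (n - (d.support.card + (t * g₀).support.card)) := by
  have : t * y = d * (t * g₀) := by rw [hy, ← mul_assoc, htd, mul_assoc]
  rw [this, numCycles_disjoint_mul hdisj]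

/-- F4: multiplying by a swap decreases `numCycles` by at most one
(phrased as: recovers at most one). -/

lemma numCycles_swap_mul_ge (y : Perm (Fin n)) {α β : Fin n} (hαβ : α ≠ β) :
    numCycles y ≤ numCycles (Equiv.swap α β * y) + 1 := by
  set t := Equiv.swap α β with ht
  have hts : t.support = {α, β} := support_swap hαβ
  -- auxiliary: the case where α is moved
  have main : ∀ (y : Perm (Fin n)) (α β : Fin n), α ≠ β → y α ≠ α →
      numCycles y ≤ numCycles (Equiv.swap α β * y) + 1 := by
    clear hts ht hαβ y
    intro y α β hαβ hα
    set t := Equiv.swap α β with ht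
    have hts : t.support = {α, β} := support_swap hαβ
    set c := y.cycleOf α with hc
    have hcmem : c ∈ y.cycleFactorsFinset :=
      cycleOf_mem_cycleFactorsFinset_iff.2 (mem_support.2 hα)
    have hccyc : c.IsCycle := (mem_cycleFactorsFinset_iff.1 hcmem).1
    have hαc : α ∈ c.support := by
      rw [hc, mem_support_cycleOf_iff]
      exact ⟨Equiv.Perm.SameCycle.refl _ _, mem_support.2 hα⟩
    set d := y * c⁻¹ with hd
    have hdc : Perm.Disjoint d c := disjoint_mul_inv_of_mem_cycleFactorsFinset hcmem
    have hy : y = d * c := by rw [hd, inv_mul_cancel_right]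
    have hsuppc : c.support ⊆ y.support := mem_cycleFactorsFinset_support_le hcmem
    have hdfix : ∀ i ∈ c.support, d i = i := by
      intro i hi
      rcases hdc i with h | h
      · exact h
      · exact absurd h (mem_support.1 hi)
    have hcards := disjoint_supp_card hdc
    have hc2 : 2 ≤ c.support.card := hccyc.two_le_card_support
    have hny : numCycles y = d.cycleFactorsFinset.card + 1 +
        (n - (d.support.card + c.support.card)) := by
      rw [hy, numCycles_disjoint_mul hdc, hccyc.cycleFactorsFinset_eq_singleton]
      simp
    by_cases hβc : β ∈ c.support
    · -- same cycle
      have htd : t * d = d * t := by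
        refine (Perm.Disjoint.commute ?_).symm.eq
        exact disjoint_of_subset (le_of_eq hts) (by
          intro i hi
          rcases Finset.mem_insert.1 hi with rfl | hi'
          · exact hdfix _ hαc
          · rw [Finset.mem_singleton] at hi'; subst hi'; exact hdfix _ hβc)
      have hstc : (t * c).support ⊆ c.support := by
        refine le_trans (support_mul_le t c) ?_
        rw [hts]
        intro i hi
        rcases Finset.mem_union.1 hi with hi' | hi'
        · rcases Finset.mem_insert.1 hi' with rfl | hi''
          · exact hαc
          · rw [Finset.mem_singleton] at hi''; subst hi''; exact hβc
        · exact hi'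
      have hdisj : Perm.Disjoint d (t * c) := disjoint_of_subset hstc hdfix
      have h1 := numCycles_mul_aux hy htd hdisj
      have h2 : (t * c).support.card ≤ c.support.card := Finset.card_le_card hstc
      have h3 := factors_pos (g := t * c)
      by_cases htc1 : t * c = 1
      · rw [htc1] at h1
        simp only [cycleFactorsFinset_one, Finset.card_empty, support_one,
          Finset.card_empty] at h1
        omega
      · have h4 := h3 htc1
        omega
    · -- β not in the cycle of α
      by_cases hβ : y β = β
      · -- β fixed by y : insertion case
        have hcβ0 : c β = β := by
          by_contra hcon
          exact hβc (mem_support.2 hcon)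
        have hβd : d β = β := by
          have hstep : y β = d β := by rw [hy, mul_apply, hcβ0]
          rw [← hstep]; exact hβ
        have htd : t * d = d * t := by
          refine (Perm.Disjoint.commute ?_).symm.eq
          exact disjoint_of_subset (le_of_eq hts) (by
            intro i hi
            rcases Finset.mem_insert.1 hi with rfl | hi'
            · exact hdfix _ hαc
            · rw [Finset.mem_singleton] at hi'; subst hi'; exact hβd)
        have hstc : (t * c).support ⊆ insert β c.support := by
          refine le_trans (support_mul_le t c) ?_
          rw [hts]
          intro i hi
          rcases Finset.mem_union.1 hi with hi' | hi'
          · rcases Finset.mem_insert.1 hi' with rfl | hi''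
            · exact Finset.mem_insert_of_mem hαc
            · rw [Finset.mem_singleton] at hi''; subst hi''; exact Finset.mem_insert_self _ _
          · exact Finset.mem_insert_of_mem hi'
        have hdisj : Perm.Disjoint d (t * c) := by
          refine disjoint_of_subset hstc ?_
          intro i hi
          rcases Finset.mem_insert.1 hi with rfl | hi'
          · exact hβd
          · exact hdfix _ hi'
        have h1 := numCycles_mul_aux hy htd hdisj
        have h2 : (t * c).support.card ≤ c.support.card + 1 :=
          le_trans (Finset.card_le_card hstc) (Finset.card_insert_le _ _)
        have htc1 : t * c ≠ 1 := by
          intro hcon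
          have hcβ : c β = β := by
            by_contra h
            exact hβc (mem_support.2 h)
          have : (t * c) β = α := by rw [mul_apply, hcβ, ht, swap_apply_right]
          rw [hcon] at this
          simp at this
          exact hαβ this.symm
        have h4 := factors_pos htc1
        omega
      · -- β in a different cycle
        set c2 := y.cycleOf β with hc2'
        have hc2mem : c2 ∈ y.cycleFactorsFinset :=
          cycleOf_mem_cycleFactorsFinset_iff.2 (mem_support.2 hβ)
        have hc2cyc : c2.IsCycle := (mem_cycleFactorsFinset_iff.1 hc2mem).1
        have hβc2 : β ∈ c2.support := by
          rw [hc2', mem_support_cycleOf_iff]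
          exact ⟨Equiv.Perm.SameCycle.refl _ _, mem_support.2 hβ⟩
        have hne : c ≠ c2 := fun h => hβc (h ▸ hβc2)
        -- decompose y = d' * (c * c2)
        set d2 := y * c2⁻¹ with hd2
        have hd2c2 : Perm.Disjoint d2 c2 := disjoint_mul_inv_of_mem_cycleFactorsFinset hc2mem
        have hy2 : y = d2 * c2 := by rw [hd2, inv_mul_cancel_right]
        have hfacy : y.cycleFactorsFinset = d2.cycleFactorsFinset ∪ {c2} := by
          conv_lhs => rw [hy2]
          rw [hd2c2.cycleFactorsFinset_mul_eq_union, hc2cyc.cycleFactorsFinset_eq_singleton]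
        have hcd2 : c ∈ d2.cycleFactorsFinset := by
          have := hcmem
          rw [hfacy, Finset.mem_union] at this
          rcases this with h | h
          · exact h
          · rw [Finset.mem_singleton] at h; exact absurd h hne
        set d := d2 * c⁻¹ with hdd
        have hdc : Perm.Disjoint d c := disjoint_mul_inv_of_mem_cycleFactorsFinset hcd2
        have hd2eq : d2 = d * c := by rw [hdd, inv_mul_cancel_right]
        have hcc2 : Perm.Disjoint c c2 := by
          have := cycleFactorsFinset_pairwise_disjoint y
          exact this hcmem hc2mem hne
        have hsdd2 : d.support ⊆ d2.support := by
          have hu : d2.support = d.support ∪ c.support := by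
            rw [hd2eq, hdc.support_mul]
          rw [hu]
          exact Finset.subset_union_left
        have hdc2 : Perm.Disjoint d c2 := by
          refine disjoint_of_subset (Finset.Subset.refl c2.support) ?_
          intro i hi
          have h2 : d2 i = i := by
            rcases hd2c2 i with h | h
            · exact h
            · exact absurd h (mem_support.1 hi)
          have h3 : i ∉ d2.support := notMem_support.2 h2
          exact notMem_support.1 (fun hmem => h3 (hsdd2 hmem))
        have hyfull : y = d * (c * c2) := by rw [hy2, hd2eq, mul_assoc]
        have hdisjg : Perm.Disjoint d (c * c2) := by
          intro x
          rcases hdc x with h | h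
          · exact Or.inl h
          · rcases hdc2 x with h' | h'
            · exact Or.inl h'
            · right; rw [mul_apply, h', h]
        have hdfix' : ∀ i ∈ c.support ∪ c2.support, d i = i := by
          intro i hi
          rcases Finset.mem_union.1 hi with hi' | hi'
          · rcases hdc i with h | h
            · exact h
            · exact absurd h (mem_support.1 hi')
          · rcases hdc2 i with h | h
            · exact h
            · exact absurd h (mem_support.1 hi')
        have htd : t * d = d * t := by
          refine (Perm.Disjoint.commute ?_).symm.eq
          refine disjoint_of_subset (le_of_eq hts) ?_
          intro i hi
          rcases Finset.mem_insert.1 hi with rfl | hi'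
          · exact hdfix' _ (Finset.mem_union_left _ hαc)
          · rw [Finset.mem_singleton] at hi'; subst hi'
            exact hdfix' _ (Finset.mem_union_right _ hβc2)
        have hstg : (t * (c * c2)).support ⊆ c.support ∪ c2.support := by
          refine le_trans (support_mul_le t (c * c2)) ?_
          intro i hi
          rcases Finset.mem_union.1 hi with hi' | hi'
          · rw [hts] at hi'
            rcases Finset.mem_insert.1 hi' with rfl | hi''
            · exact Finset.mem_union_left _ hαc
            · rw [Finset.mem_singleton] at hi''; subst hi''
              exact Finset.mem_union_right _ hβc2
          · exact le_trans (support_mul_le c c2) (le_of_eq rfl) hi'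
        have hdisj : Perm.Disjoint d (t * (c * c2)) := disjoint_of_subset hstg hdfix'
        have h1 := numCycles_mul_aux hyfull htd hdisj
        have hny2 : numCycles y = d.cycleFactorsFinset.card + 2 +
            (n - (d.support.card + (c * c2).support.card)) := by
          rw [hyfull, numCycles_disjoint_mul hdisjg, hcc2.cycleFactorsFinset_mul_eq_union,
            hccyc.cycleFactorsFinset_eq_singleton, hc2cyc.cycleFactorsFinset_eq_singleton]
          rw [Finset.card_union_of_disjoint (Finset.disjoint_singleton.2 hne)]
          simp
        have hsupcc2 : (c * c2).support = c.support ∪ c2.support := hcc2.support_mul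
        have hcardg : (t * (c * c2)).support.card ≤ (c * c2).support.card := by
          rw [hsupcc2]; exact Finset.card_le_card hstg
        have hg1 : t * (c * c2) ≠ 1 := by
          -- find an element of c.support other than α
          have h2lt : 1 < c.support.card := lt_of_lt_of_le one_lt_two hccyc.two_le_card_support
          obtain ⟨γ, hγmem, hγne⟩ := Finset.exists_mem_ne h2lt α
          intro hcon
          have hγc2 : c2 γ = γ := by
            rcases hcc2 γ with h | h
            · exact absurd h (mem_support.1 hγmem)
            · exact h
          have hγmoves : (t * (c * c2)) γ ≠ γ := by
            rw [mul_apply, mul_apply, hγc2]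
            have hcγ : c γ ∈ c.support := by
              rw [apply_mem_support]; exact hγmem
            by_cases hcγα : c γ = α
            · rw [hcγα, ht, swap_apply_left]
              intro h; subst h; exact hβc hγmem
            · have hcγβ : c γ ≠ β := fun h => hβc (h ▸ hcγ)
              rw [ht, swap_apply_of_ne_of_ne hcγα hcγβ]
              exact mem_support.1 hγmem
          rw [hcon] at hγmoves
          simp at hγmoves
        have h4 := factors_pos hg1
        have hcards2 := disjoint_supp_card hdisjg
        have hll : (c * c2).support.card = (c.support ∪ c2.support).card := by rw [hsupcc2]
        omega
  -- reduce general case to `main`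
  by_cases hα : y α = α
  · by_cases hβ : y β = β
    · -- both fixed: disjoint
      have hdisj : Perm.Disjoint t y := by
        refine disjoint_of_subset (Finset.Subset.refl y.support) ?_
        intro i hi
        have hiα : i ≠ α := fun h => (mem_support.1 hi) (h ▸ hα)
        have hiβ : i ≠ β := fun h => (mem_support.1 hi) (h ▸ hβ)
        rw [ht, swap_apply_of_ne_of_ne hiα hiβ]
      have h1 : numCycles (t * y) =
          t.cycleFactorsFinset.card + y.cycleFactorsFinset.card +
            (n - (t.support.card + y.support.card)) := numCycles_disjoint_mul hdisj
      have h2 : t.cycleFactorsFinset.card = 1 := by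
        rw [(isCycle_swap hαβ).cycleFactorsFinset_eq_singleton]; simp
      have h3 : t.support.card = 2 := card_support_swap hαβ
      have h4 := disjoint_supp_card hdisj
      have h5 := numCycles_eq y
      have h6 := numCycles_eq (t * y)
      omega
    · -- β moved: use main with swapped roles
      rw [ht, Equiv.swap_comm]
      exact main y β α (Ne.symm hαβ) hβ
  · exact main y α β hαβ hα

lemma numCycles_adj_swap (y : Perm (Fin n)) {a : Fin n} (ha : y a ≠ a) :
    numCycles y + 1 ≤ numCycles (Equiv.swap a (y a) * y) := by
  set t := Equiv.swap a (y a) with ht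
  set c := y.cycleOf a with hc
  have hcmem : c ∈ y.cycleFactorsFinset :=
    cycleOf_mem_cycleFactorsFinset_iff.2 (mem_support.2 ha)
  have hccyc : c.IsCycle := (mem_cycleFactorsFinset_iff.1 hcmem).1
  have hca : c a = y a := cycleOf_apply_self y a
  have hac : a ∈ c.support := by
    rw [hc, mem_support_cycleOf_iff]
    exact ⟨Equiv.Perm.SameCycle.refl _ _, mem_support.2 ha⟩
  have hyac : y a ∈ c.support := by rw [← hca, apply_mem_support]; exact hac
  set d := y * c⁻¹ with hd
  have hdc : Perm.Disjoint d c := disjoint_mul_inv_of_mem_cycleFactorsFinset hcmem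
  have hy : y = d * c := by rw [hd, inv_mul_cancel_right]
  have hdfix : ∀ i ∈ c.support, d i = i := by
    intro i hi
    rcases hdc i with h | h
    · exact h
    · exact absurd h (mem_support.1 hi)
  have hts : t.support = {a, y a} := support_swap ha.symm
  have htd : t * d = d * t := by
    refine (Perm.Disjoint.commute ?_).symm.eq
    refine disjoint_of_subset (le_of_eq hts) ?_
    intro i hi
    rcases Finset.mem_insert.1 hi with rfl | hi'
    · exact hdfix _ hac
    · rw [Finset.mem_singleton] at hi'; subst hi'; exact hdfix _ hyac
  have hstc : (t * c).support ⊆ c.support := by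
    refine le_trans (support_mul_le t c) ?_
    rw [hts]
    intro i hi
    rcases Finset.mem_union.1 hi with hi' | hi'
    · rcases Finset.mem_insert.1 hi' with rfl | hi''
      · exact hac
      · rw [Finset.mem_singleton] at hi''; subst hi''; exact hyac
    · exact hi'
  have hdisj : Perm.Disjoint d (t * c) := disjoint_of_subset hstc hdfix
  have h1 := numCycles_mul_aux hy htd hdisj
  have hny : numCycles y = d.cycleFactorsFinset.card + 1 +
      (n - (d.support.card + c.support.card)) := by
    rw [hy, numCycles_disjoint_mul hdc, hccyc.cycleFactorsFinset_eq_singleton]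
    simp
  have hcards := disjoint_supp_card hdc
  have hc2 : 2 ≤ c.support.card := hccyc.two_le_card_support
  have hcya : c (y a) = y (y a) := by
    rw [hc, cycleOf_apply, if_pos]
    exact ⟨1, by simp⟩
  by_cases h2 : y (y a) = a
  · -- the cycle of a is the 2-cycle (a, y a) : it disappears
    have hcswap : c = Equiv.swap a (y a) := by
      ext z
      by_cases hz : y.SameCycle a z
      · obtain ⟨i, hiz⟩ := hz
        have hz' : z = a ∨ z = y a := by
          rcases zpow_apply_eq_of_apply_apply_eq_self h2 i with h | h
          · exact Or.inl (hiz ▸ h.symm ▸ rfl)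
          · exact Or.inr (hiz ▸ h.symm ▸ rfl)
        rcases hz' with rfl | rfl
        · rw [hca, swap_apply_left]
        · have : c (y a) = a := by rw [hcya, h2]
          rw [this, swap_apply_right]
      · have hza : z ≠ a := fun h => hz (h ▸ Equiv.Perm.SameCycle.refl _ _)
        have hzya : z ≠ y a := fun h => hz (h ▸ ⟨1, by simp⟩)
        rw [hc, cycleOf_apply, if_neg hz, swap_apply_of_ne_of_ne hza hzya]
    have htc1 : t * c = 1 := by rw [ht, hcswap, swap_mul_self]
    rw [htc1] at h1
    simp only [cycleFactorsFinset_one, Finset.card_empty, support_one, Finset.card_empty] at h1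
    omega
  · -- the cycle of a shrinks by one point
    have hcc : c (c a) ≠ a := by rw [hca, hcya]; exact h2
    have hsupp : (t * c).support = c.support \ {a} := by
      have := support_swap_mul_eq c a hcc
      rw [ht]
      rw [← hca]
      exact this
    have hcard : (t * c).support.card = c.support.card - 1 := by
      rw [hsupp, Finset.card_sdiff_of_subset (by simpa using hac)]
      simp
    have htc1 : t * c ≠ 1 := by
      intro hcon
      rw [hcon, support_one] at hsupp
      have : c.support ⊆ {a} := by
        intro i hi
        by_contra hne
        have : i ∈ c.support \ {a} := Finset.mem_sdiff.2 ⟨hi, by simpa using hne⟩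
        rw [← hsupp] at this
        simp at this
      have h5 := le_trans hc2 (Finset.card_le_card this)
      simp at h5
    have h4 := factors_pos htc1
    rw [hny, h1, hcard]
    omega

lemma exists_swap_list : ∀ (N : ℕ) (z : Perm (Fin n)), z.support.card ≤ N →
    ∃ l : List (Perm (Fin n)), (∀ t ∈ l, t.IsSwap) ∧ l.prod = z ∧
      l.length = n - numCycles z := by
  intro N
  induction N with
  | zero =>
    intro z hz
    have hz1 : z = 1 := by
      rw [← support_eq_empty_iff]
      exact Finset.card_eq_zero.1 (Nat.le_zero.1 hz)
    subst hz1
    exact ⟨[], by simp, by simp, by simp [numCycles_one]⟩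
  | succ N ih =>
    intro z hz
    by_cases hz1 : z = 1
    · subst hz1
      exact ⟨[], by simp, by simp, by simp [numCycles_one]⟩
    · have hsupp : z.support.Nonempty :=
        Finset.nonempty_iff_ne_empty.2 (fun h => hz1 (support_eq_empty_iff.1 h))
      obtain ⟨a, ha⟩ := hsupp
      have haz : z a ≠ a := mem_support.1 ha
      set t := Equiv.swap a (z a) with ht
      have hlt : (t * z).support.card < z.support.card := card_support_swap_mul haz
      obtain ⟨l, hsw, hprod, hlen⟩ := ih (t * z) (by omega)
      have heq1 : t * (t * z) = z := by rw [← mul_assoc, ht, swap_mul_self, one_mul]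
      have hup : numCycles (t * z) = numCycles z + 1 := by
        have h1 := numCycles_adj_swap z haz
        rw [← ht] at h1
        have h2 := numCycles_swap_mul_ge (t * z) (α := a) (β := z a) (Ne.symm haz)
        rw [heq1] at h2
        omega
      have hle := numCycles_le (t * z)
      refine ⟨t :: l, ?_, ?_, ?_⟩
      · intro s hs
        rcases List.mem_cons.1 hs with rfl | hs'
        · exact ⟨a, z a, Ne.symm haz, rfl⟩
        · exact hsw s hs'
      · rw [List.prod_cons, hprod, heq1]
      · simp only [List.length_cons, hlen, hup]
        omega

lemma absLen_set_nonempty (z : Perm (Fin n)) :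
    {k | ∃ l : List (Perm (Fin n)), l.length = k ∧ (∀ t ∈ l, t.IsSwap) ∧ l.prod = z}.Nonempty := by
  obtain ⟨l, hsw, hprod, hlen⟩ := exists_swap_list z.support.card z le_rfl
  exact ⟨n - numCycles z, l, hlen, hsw, hprod⟩

lemma absLen_spec (z : Perm (Fin n)) :
    ∃ l : List (Perm (Fin n)), l.length = absLen z ∧ (∀ t ∈ l, t.IsSwap) ∧ l.prod = z :=
  Nat.sInf_mem (absLen_set_nonempty z)

lemma numCycles_swap_list : ∀ l : List (Perm (Fin n)), (∀ t ∈ l, t.IsSwap) →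
    n ≤ numCycles l.prod + l.length := by
  intro l
  induction l with
  | nil => intro _; simp [numCycles_one]
  | cons t l ih =>
    intro hsw
    obtain ⟨x, y, hxy, hts⟩ := hsw t List.mem_cons_self
    have h1 := ih (fun s hs => hsw s (List.mem_cons_of_mem t hs))
    have h2 := numCycles_swap_mul_ge l.prod hxy
    rw [← hts] at h2
    rw [List.prod_cons, List.length_cons]
    omega

lemma absLen_eq_card (z : Perm (Fin n)) : absLen z = n - numCycles z := by
  refine le_antisymm ?_ ?_
  · obtain ⟨l, hsw, hprod, hlen⟩ := exists_swap_list z.support.card z le_rfl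
    exact Nat.sInf_le ⟨l, hlen, hsw, hprod⟩
  · obtain ⟨l, hlen, hsw, hprod⟩ := absLen_spec z
    have := numCycles_swap_list l hsw
    rw [hprod, hlen] at this
    omega

lemma len_swap_lt (u : Perm (Fin n)) {a b : Fin n} (hab : a < b) (hba : u⁻¹ b < u⁻¹ a) :
    len (Equiv.swap a b * u) < len u := by
  set p := u⁻¹ a with hp
  set q := u⁻¹ b with hq
  have hup : u p = a := by rw [hp, apply_inv_self]
  have huq : u q = b := by rw [hq, apply_inv_self]
  have hqp : q < p := hba
  set σ := Equiv.swap p q with hσ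
  set v := Equiv.swap a b * u with hv
  have hvu : ∀ k, v k = u (σ k) := by
    intro k
    by_cases hk : k = p
    · subst hk; rw [hσ, swap_apply_left, huq, hv, mul_apply, hup, swap_apply_left]
    · by_cases hk' : k = q
      · subst hk'; rw [hσ, swap_apply_right, hup, hv, mul_apply, huq, swap_apply_right]
      · have h1 : u k ≠ a := fun h => hk (by rw [← hup] at h; exact u.injective h)
        have h2 : u k ≠ b := fun h => hk' (by rw [← huq] at h; exact u.injective h)
        rw [hσ, swap_apply_of_ne_of_ne hk hk', hv, mul_apply, swap_apply_of_ne_of_ne h1 h2]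
  set Iu := Finset.univ.filter (fun r : Fin n × Fin n => r.1 < r.2 ∧ u r.2 < u r.1) with hIu
  set Iv := Finset.univ.filter (fun r : Fin n × Fin n => r.1 < r.2 ∧ v r.2 < v r.1) with hIv
  set F : Fin n × Fin n → Fin n × Fin n :=
    fun r => if σ r.1 < σ r.2 then (σ r.1, σ r.2) else r with hF
  have hmaps : ∀ r ∈ Iv, F r ∈ Iu := by
    intro r hr
    rw [hIv, Finset.mem_filter] at hr
    obtain ⟨-, hr1, hr2⟩ := hr
    rw [hIu, Finset.mem_filter]
    by_cases hcond : σ r.1 < σ r.2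
    · rw [hF]; simp only [if_pos hcond]
      refine ⟨Finset.mem_univ _, hcond, ?_⟩
      rw [hvu, hvu] at hr2
      exact hr2
    · rw [hF]; simp only [if_neg hcond]
      refine ⟨Finset.mem_univ _, hr1, ?_⟩
      have hne : σ r.2 ≠ σ r.1 := fun h => (ne_of_lt hr1) (σ.injective h).symm
      have hlt : σ r.2 < σ r.1 := lt_of_le_of_ne (not_lt.1 hcond) hne
      by_cases h1q : r.1 = q
      · by_cases h2p : r.2 = p
        · exfalso
          rw [hvu, hvu, h1q, h2p, hσ, swap_apply_left, swap_apply_right, hup, huq] at hr2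
          exact absurd hr2 (not_lt.2 (le_of_lt hab))
        · have h2q : r.2 ≠ q := fun h => (lt_irrefl r.1) (by rw [h1q] at hr1 ⊢; exact h ▸ hr1)
          have hv2 : v r.2 = u r.2 := by rw [hvu, hσ, swap_apply_of_ne_of_ne h2p h2q]
          have hv1 : v r.1 = a := by rw [hvu, h1q, hσ, swap_apply_right, hup]
          rw [hv1, hv2] at hr2
          have hur1 : u r.1 = b := by rw [h1q, huq]
          rw [hur1]
          exact lt_trans hr2 hab
      · by_cases h2p : r.2 = p
        · have h1p : r.1 ≠ p := fun h => (lt_irrefl r.1) (by rw [← h2p] at h; exact h ▸ hr1)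
          have hv1 : v r.1 = u r.1 := by rw [hvu, hσ, swap_apply_of_ne_of_ne h1p h1q]
          have hv2 : v r.2 = b := by rw [hvu, h2p, hσ, swap_apply_left, huq]
          rw [hv1, hv2] at hr2
          have hur2 : u r.2 = a := by rw [h2p, hup]
          rw [hur2]
          exact lt_trans hab hr2
        · exfalso
          by_cases h1p : r.1 = p
          · have h2q : r.2 ≠ q := fun h => by
              rw [h1p, h] at hr1; exact absurd (lt_trans hqp hr1) (lt_irrefl _)
            rw [h1p, hσ, swap_apply_left, swap_apply_of_ne_of_ne h2p h2q] at hlt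
            rw [h1p] at hr1
            exact absurd (lt_trans hqp (lt_trans hr1 hlt)) (lt_irrefl _)
          · by_cases h2q : r.2 = q
            · rw [h2q, hσ, swap_apply_right, swap_apply_of_ne_of_ne h1p h1q] at hlt
              rw [h2q] at hr1
              exact absurd (lt_trans hlt (lt_trans hr1 hqp)) (lt_irrefl _)
            · rw [hσ, swap_apply_of_ne_of_ne h1p h1q, swap_apply_of_ne_of_ne h2p h2q] at hlt
              exact absurd (lt_trans hr1 hlt) (lt_irrefl _)
  have hinj : Set.InjOn F Iv := by
    intro r1 h1 r2 h2 heq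
    have h1' : r1.1 < r1.2 ∧ v r1.2 < v r1.1 := by
      have hm : r1 ∈ Iv := h1
      rw [hIv, Finset.mem_filter] at hm; exact hm.2
    have h2' : r2.1 < r2.2 ∧ v r2.2 < v r2.1 := by
      have hm : r2 ∈ Iv := h2
      rw [hIv, Finset.mem_filter] at hm; exact hm.2
    by_cases c1 : σ r1.1 < σ r1.2 <;> by_cases c2 : σ r2.1 < σ r2.2
    · rw [hF] at heq; simp only [if_pos c1, if_pos c2, Prod.mk.injEq] at heq
      exact Prod.ext (σ.injective heq.1) (σ.injective heq.2)
    · rw [hF] at heq; simp only [if_pos c1, if_neg c2] at heq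
      exfalso
      have e1 : r2.1 = σ r1.1 := by rw [← heq]
      have e2 : r2.2 = σ r1.2 := by rw [← heq]
      rw [e1, e2, hσ, swap_apply_self, swap_apply_self] at c2
      exact c2 h1'.1
    · rw [hF] at heq; simp only [if_neg c1, if_pos c2] at heq
      exfalso
      have e1 : r1.1 = σ r2.1 := by rw [heq]
      have e2 : r1.2 = σ r2.2 := by rw [heq]
      rw [e1, e2, hσ, swap_apply_self, swap_apply_self] at c1
      exact c1 h2'.1
    · rw [hF] at heq; simp only [if_neg c1, if_neg c2] at heq
      exact heq
  have hmemqp : (q, p) ∈ Iu := by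
    rw [hIu, Finset.mem_filter]
    exact ⟨Finset.mem_univ _, hqp, by rw [hup, huq]; exact hab⟩
  have hnot : (q, p) ∉ Iv.image F := by
    intro hmem
    obtain ⟨r, hr, heq⟩ := Finset.mem_image.1 hmem
    rw [hIv, Finset.mem_filter] at hr
    by_cases hcond : σ r.1 < σ r.2
    · rw [hF] at heq; simp only [if_pos hcond, Prod.mk.injEq] at heq
      have e1 : r.1 = p := by
        have h' := congrArg σ heq.1
        rwa [hσ, swap_apply_self, swap_apply_right] at h'
      have e2 : r.2 = q := by
        have h' := congrArg σ heq.2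
        rwa [hσ, swap_apply_self, swap_apply_left] at h'
      rw [e1, e2] at hr
      exact absurd (lt_trans hqp hr.2.1) (lt_irrefl _)
    · rw [hF] at heq; simp only [if_neg hcond] at heq
      rw [heq] at hr
      have h1 : v p = b := by rw [hvu, hσ, swap_apply_left, huq]
      have h2 : v q = a := by rw [hvu, hσ, swap_apply_right, hup]
      have h3 := hr.2.2
      simp only at h3
      rw [h1, h2] at h3
      exact absurd (lt_trans hab h3) (lt_irrefl _)
  have hsub : Iv.image F ⊆ Iu.erase (q, p) := by
    intro r hr
    rw [Finset.mem_erase]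
    refine ⟨fun h => hnot (h ▸ hr), ?_⟩
    obtain ⟨r0, hr0, heq⟩ := Finset.mem_image.1 hr
    exact heq ▸ hmaps r0 hr0
  have hlv : len v = Iv.card := by rw [hIv]; rfl
  have hlu : len u = Iu.card := by rw [hIu]; rfl
  rw [hlv, hlu, ← Finset.card_image_of_injOn hinj]
  calc (Iv.image F).card ≤ (Iu.erase (q,p)).card := Finset.card_le_card hsub
    _ < Iu.card := Finset.card_erase_lt_of_mem hmemqp

lemma len_order_pres (u : Perm (Fin n)) {α β : Fin n} (hne : α ≠ β)
    (h : ¬ len (Equiv.swap α β * u) < len u) : (α < β ↔ u⁻¹ α < u⁻¹ β) := by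
  constructor
  · intro hlt
    rcases lt_trichotomy (u⁻¹ α) (u⁻¹ β) with h1 | h1 | h1
    · exact h1
    · exact absurd ((Equiv.injective u⁻¹) h1) hne
    · exact absurd (len_swap_lt u hlt h1) h
  · intro hlt
    rcases lt_trichotomy α β with h1 | h1 | h1
    · exact h1
    · exact absurd h1 hne
    · exfalso
      have h2 := len_swap_lt u h1 hlt
      rw [Equiv.swap_comm] at h2
      exact h h2

lemma reachesIn_snoc {α : Type*} {r : α → α → Prop} :
    ∀ {m : ℕ} {u v w : α}, reachesIn r m u v → r v w → reachesIn r (m + 1) u w := by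
  intro m
  induction m with
  | zero =>
    intro u v w h e
    exact ⟨w, h ▸ e, rfl⟩
  | succ m ih =>
    intro u v w h e
    obtain ⟨v1, h1, h2⟩ := h
    exact ⟨v1, h1, ih h2 e⟩

lemma bruhat_exists_reach {v u : Perm (Fin n)} (h : bruhatLe v u) :
    ∃ m, reachesIn edge m v u := by
  induction h with
  | refl => exact ⟨0, rfl⟩
  | tail _ e ih =>
    obtain ⟨m, hm⟩ := ih
    exact ⟨m + 1, reachesIn_snoc hm e⟩

lemma al_mem {v u : Perm (Fin n)} (h : bruhatLe v u) : reachesIn edge (al v u) v u :=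
  Nat.sInf_mem (bruhat_exists_reach h)

lemma al_self (v : Perm (Fin n)) : al v v = 0 :=
  Nat.eq_zero_of_le_zero (Nat.sInf_le (rfl : reachesIn edge 0 v v))

lemma al_le_succ {v u' u : Perm (Fin n)} (h : bruhatLe v u') (e : edge u' u) :
    al v u ≤ al v u' + 1 :=
  Nat.sInf_le (reachesIn_snoc (al_mem h) e)

lemma reach_prod : ∀ (m : ℕ) (v u : Perm (Fin n)), reachesIn edge m v u →
    ∃ l : List (Perm (Fin n)), l.length = m ∧ (∀ t ∈ l, t.IsSwap) ∧ l.prod = u * v⁻¹ := by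
  intro m
  induction m with
  | zero =>
    intro v u h
    exact ⟨[], rfl, by simp, by simp [show v = u from h]⟩
  | succ m ih =>
    intro v u h
    obtain ⟨v1, ⟨⟨t, hts, hv1⟩, -⟩, hrest⟩ := h
    obtain ⟨l, hlen, hsw, hprod⟩ := ih v1 u hrest
    refine ⟨l ++ [t], by simp [hlen], ?_, ?_⟩
    · intro s hs
      rcases List.mem_append.1 hs with hs' | hs'
      · exact hsw s hs'
      · rw [List.mem_singleton] at hs'; subst hs'; exact hts
    · rw [List.prod_append, List.prod_singleton, hprod, hv1]
      simp [mul_assoc]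

lemma absLen_le_al {v u : Perm (Fin n)} (h : bruhatLe v u) : absLen (u * v⁻¹) ≤ al v u := by
  obtain ⟨l, hlen, hsw, hprod⟩ := reach_prod (al v u) v u (al_mem h)
  exact Nat.sInf_le ⟨l, hlen, hsw, hprod⟩

lemma absLen_triangle (x y : Perm (Fin n)) : absLen (x * y) ≤ absLen x + absLen y := by
  obtain ⟨lx, hlx, hswx, hpx⟩ := Nat.sInf_mem (absLen_set_nonempty x)
  obtain ⟨ly, hly, hswy, hpy⟩ := Nat.sInf_mem (absLen_set_nonempty y)
  refine Nat.sInf_le ⟨lx ++ ly, ?_, ?_, ?_⟩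
  · show (lx ++ ly).length = absLen x + absLen y
    rw [List.length_append, hlx, hly]; rfl
  · intro s hs
    rcases List.mem_append.1 hs with h | h
    · exact hswx s h
    · exact hswy s h
  · rw [List.prod_append, hpx, hpy]

lemma swap_list_reverse_prod : ∀ l : List (Perm (Fin n)), (∀ t ∈ l, t.IsSwap) →
    l.reverse.prod = l.prod⁻¹ := by
  intro l
  induction l with
  | nil => simp
  | cons t l ih =>
    intro hsw
    obtain ⟨x, y, hxy, hts⟩ := hsw t List.mem_cons_self
    rw [List.reverse_cons, List.prod_append, List.prod_singleton,
      ih (fun s hs => hsw s (List.mem_cons_of_mem t hs)), List.prod_cons, mul_inv_rev]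
    congr 1
    rw [hts, swap_inv]

lemma absLen_inv (x : Perm (Fin n)) : absLen x⁻¹ ≤ absLen x := by
  obtain ⟨l, hl, hsw, hp⟩ := Nat.sInf_mem (absLen_set_nonempty x)
  refine Nat.sInf_le ⟨l.reverse, by show l.reverse.length = absLen x; rw [List.length_reverse, hl]; rfl, ?_, ?_⟩
  · intro s hs; exact hsw s (List.mem_reverse.1 hs)
  · rw [swap_list_reverse_prod l hsw, hp]

lemma absLen_inv_eq (x : Perm (Fin n)) : absLen x⁻¹ = absLen x :=
  le_antisymm (absLen_inv x) (by simpa using absLen_inv x⁻¹)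

/-- main induction -/

lemma main_exists : ∀ (N : ℕ) (u w : Perm (Fin n)), (u * w⁻¹).support.card ≤ N →
    ∃ v : Perm (Fin n), bruhatLe v u ∧ bruhatLe v w ∧
      al v u + al v w ≤ n - numCycles (u * w⁻¹) := by
  intro N
  induction N with
  | zero =>
    intro u w h
    have hx1 : u * w⁻¹ = 1 := by
      rw [← support_eq_empty_iff]
      exact Finset.card_eq_zero.1 (Nat.le_zero.1 h)
    have huw : u = w := by
      have := mul_inv_eq_one.1 hx1
      exact this
    subst huw
    exact ⟨u, Relation.ReflTransGen.refl, Relation.ReflTransGen.refl, by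
      simp [al_self]⟩
  | succ N ih =>
    intro u w hcard
    by_cases hx1 : u * w⁻¹ = 1
    · have huw : u = w := mul_inv_eq_one.1 hx1
      subst huw
      exact ⟨u, Relation.ReflTransGen.refl, Relation.ReflTransGen.refl, by
        simp [al_self]⟩
    · set x := u * w⁻¹ with hx
      by_cases hcase : ∃ a, x a ≠ a ∧ len (Equiv.swap a (x a) * u) < len u
      · obtain ⟨a, ha, hlen⟩ := hcase
        set t := Equiv.swap a (x a) with ht
        have hx' : (t * u) * w⁻¹ = t * x := by rw [mul_assoc]
        have hlt := card_support_swap_mul (f := x) (x := a) ha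
        have hsupp : ((t * u) * w⁻¹).support.card ≤ N := by
          rw [hx']
          rw [← ht] at hlt
          omega
        obtain ⟨v, hv1, hv2, hv3⟩ := ih (t * u) w hsupp
        have hedge : edge (t * u) u := by
          refine ⟨⟨t, ⟨a, x a, Ne.symm ha, rfl⟩, ?_⟩, hlen⟩
          rw [← mul_assoc, ht, swap_mul_self, one_mul]
        refine ⟨v, hv1.tail hedge, hv2, ?_⟩
        have h1 : al v u ≤ al v (t * u) + 1 := al_le_succ hv1 hedge
        have h2 : numCycles x + 1 ≤ numCycles (t * x) := by
          have := numCycles_adj_swap x ha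
          rw [← ht] at this
          exact this
        have h3 : numCycles (t * x) ≤ n := numCycles_le _
        rw [hx'] at hv3
        omega
      · by_cases hcase2 : ∃ a, x a ≠ a ∧ len (Equiv.swap a (x⁻¹ a) * w) < len w
        · obtain ⟨a, ha, hlen⟩ := hcase2
          have hne' : x⁻¹ a ≠ a := by
            intro h
            have h2 := congrArg x h
            rw [apply_inv_self] at h2
            exact ha h2.symm
          set t' := Equiv.swap a (x⁻¹ a) with ht'
          set t := Equiv.swap a (x a) with ht
          have hx' : u * (t' * w)⁻¹ = t * x := by
            rw [mul_inv_rev, ← mul_assoc, ht', swap_inv]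
            have hms : x * Equiv.swap a (x⁻¹ a) =
                Equiv.swap (x a) (x (x⁻¹ a)) * x :=
              Equiv.mul_swap_eq_swap_mul x _ _
            rw [hms, apply_inv_self, Equiv.swap_comm, ← ht]
          have hlt := card_support_swap_mul (f := x) (x := a) ha
          have hsupp : (u * (t' * w)⁻¹).support.card ≤ N := by
            rw [hx']
            rw [← ht] at hlt
            omega
          obtain ⟨v, hv1, hv2, hv3⟩ := ih u (t' * w) hsupp
          have hedge : edge (t' * w) w := by
            refine ⟨⟨t', ⟨a, x⁻¹ a, Ne.symm hne', rfl⟩, ?_⟩, hlen⟩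
            rw [← mul_assoc, ht', swap_mul_self, one_mul]
          refine ⟨v, hv1, hv2.tail hedge, ?_⟩
          have h1 : al v w ≤ al v (t' * w) + 1 := al_le_succ hv2 hedge
          have h2 : numCycles x + 1 ≤ numCycles (t * x) := by
            have := numCycles_adj_swap x ha
            rw [← ht] at this
            exact this
          have h3 : numCycles (t * x) ≤ n := numCycles_le _
          rw [hx'] at hv3
          omega
        · exfalso
          push_neg at hcase hcase2
          have hw_inv : ∀ y : Fin n, w⁻¹ y = u⁻¹ (x y) := by
            intro y
            rw [hx]
            simp [mul_apply]
          have Q1 : ∀ a, x a ≠ a → (a < x a ↔ u⁻¹ a < u⁻¹ (x a)) := by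
            intro a ha
            exact len_order_pres u (Ne.symm ha) (not_lt.2 (hcase a ha))
          have Q2 : ∀ a, x a ≠ a → (a < x⁻¹ a ↔ w⁻¹ a < w⁻¹ (x⁻¹ a)) := by
            intro a ha
            have hne' : a ≠ x⁻¹ a := by
              intro h
              have h2 := congrArg x h
              rw [apply_inv_self] at h2
              exact ha h2
            exact len_order_pres w hne' (not_lt.2 (hcase2 a ha))
          have R : ∀ b, x b ≠ b → (b < x b ↔ x b < x (x b)) := by
            intro b hb
            have hxb : x (x b) ≠ x b := fun h => hb (x.injective h)
            have e1 : x b < x (x b) ↔ u⁻¹ (x b) < u⁻¹ (x (x b)) := Q1 (x b) hxb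
            have e2 : x b < b ↔ w⁻¹ (x b) < w⁻¹ b := by
              have := Q2 (x b) hxb
              rwa [inv_apply_self] at this
            rw [hw_inv, hw_inv] at e2
            -- e2 : x b < b ↔ u⁻¹ (x (x b)) < u⁻¹ (x b)
            constructor
            · intro h
              rw [e1]
              rcases lt_trichotomy (u⁻¹ (x b)) (u⁻¹ (x (x b))) with h' | h' | h'
              · exact h'
              · exact absurd (x.injective ((Equiv.injective u⁻¹) h')) hb.symm.elim
              · exact absurd (e2.2 h') (not_lt.2 (le_of_lt h))
            · intro h
              rcases lt_trichotomy b (x b) with h' | h' | h'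
              · exact h'
              · exact absurd h'.symm hb
              · exact absurd (e2.1 h') (not_lt.2 (le_of_lt (e1.1 h)))
          -- derive the contradiction via the maximum of the support
          have hsuppne : x.support.Nonempty :=
            Finset.nonempty_iff_ne_empty.2 (fun h => hx1 (support_eq_empty_iff.1 h))
          set M := x.support.max' hsuppne with hM
          have hMmem : M ∈ x.support := Finset.max'_mem _ _
          have hMne : x M ≠ M := mem_support.1 hMmem
          have hxM : x M ≤ M := Finset.le_max' _ _ (apply_mem_support.2 hMmem)
          set b := x⁻¹ M with hb
          have hxb : x b = M := by rw [hb, apply_inv_self]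
          have hbne : x b ≠ b := by
            rw [hxb]
            intro h
            have h2 := congrArg x h
            rw [hxb] at h2
            exact hMne h2
          have hbmem : b ∈ x.support := by
            rw [mem_support]
            intro h
            exact hbne h
          have hbM : b < M :=
            lt_of_le_of_ne (Finset.le_max' _ _ hbmem) (fun h => hbne (by rw [hxb, ← h]))
          have hfin := (R b hbne).1 (by rw [hxb]; exact hbM)
          rw [hxb] at hfin
          exact absurd hfin (not_lt.2 hxM)

end BruhatAux

/-- For all `u, w ∈ S_n` there exists `v ∈ S_n` with `v ≤ u`, `v ≤ w` and
`al(v,u) + al(v,w) = ℓ′(u w⁻¹) = n − c(u w⁻¹)`. -/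
theorem exists_meet_with_al_sum {n : ℕ} (u w : Perm (Fin n)) :
    ∃ v : Perm (Fin n), bruhatLe v u ∧ bruhatLe v w ∧
      al v u + al v w = absLen (u * w⁻¹) ∧
      absLen (u * w⁻¹) = n - numCycles (u * w⁻¹) := by
  obtain ⟨v, hv1, hv2, hv3⟩ :=
    BruhatAux.main_exists (u * w⁻¹).support.card u w le_rfl
  have he : absLen (u * w⁻¹) = n - numCycles (u * w⁻¹) := BruhatAux.absLen_eq_card _
  have hlow : absLen (u * w⁻¹) ≤ al v u + al v w := by
    have h1 : absLen (u * v⁻¹) ≤ al v u := BruhatAux.absLen_le_al hv1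
    have h2 : absLen (w * v⁻¹) ≤ al v w := BruhatAux.absLen_le_al hv2
    have h3 : absLen (v * w⁻¹) = absLen (w * v⁻¹) := by
      rw [← BruhatAux.absLen_inv_eq (w * v⁻¹), mul_inv_rev, inv_inv]
    calc absLen (u * w⁻¹) = absLen ((u * v⁻¹) * (v * w⁻¹)) := by
          rw [mul_assoc, inv_mul_cancel_left]
      _ ≤ absLen (u * v⁻¹) + absLen (v * w⁻¹) := BruhatAux.absLen_triangle _ _
      _ ≤ al v u + al v w := by rw [h3]; exact Nat.add_le_add h1 h2
  exact ⟨v, hv1, hv2, le_antisymm (he ▸ hv3) hlow, he⟩
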